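/- arXiv:2212.08719 — 2 statements merged into one kernel-verified Lean document; each statement's English description precedes it below -/
import Mathlib

section
/- Let S be a set of permutations of the positive integers that is closed under composition and contains the identity, acting on 𝔅 via σ ↦ f_σ. Then the action of S on 𝔅 is distal if and only if it admits a finite pseudo-co-decomposition (𝔅,(S_i : 1 ≤ i ≤ n)) into distal transformation semigroups, i.e. subsemigroups S_1,…,S_n of S, each containing the identity, whose union generates S, such that for all indices i_1,…,i_k ∈ {1,…,n}, every x ∈ 𝔅 and every permutation m of {1,…,k} the orbit sets satisfy x S_{i_1}⋯S_{i_k} = x S_{i_{m_1}}⋯S_{i_{m_k}}, and such that each action of S_i on 𝔅 is distal. -/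
open Pointwise Classical

/-- 𝔅 = {0} ∪ {1/n : n a positive integer} as a subspace of ℝ. -/
def Bset : Set ℝ := {x | x = 0 ∨ ∃ n : ℕ+, x = 1 / ((n : ℕ) : ℝ)}

/-- The homeomorphism `f_σ` of `𝔅` induced by a permutation `σ` of the positive
integers: `(1/k) f_σ = 1/σ(k)` and `0 f_σ = 0`. -/
noncomputable def fPerm (σ : Equiv.Perm ℕ+) (x : Bset) : Bset :=
  if h : ∃ n : ℕ+, (x : ℝ) = 1 / ((n : ℕ) : ℝ) then
    ⟨1 / (((σ h.choose : ℕ+) : ℕ) : ℝ), Or.inr ⟨σ h.choose, rfl⟩⟩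
  else ⟨0, Or.inl rfl⟩

/-- The pair `(x, y)` is proximal for the set `S` of self-maps of `X`. -/
def IsProximal {X : Type*} [TopologicalSpace X] (S : Set (X → X)) (x y : X) : Prop :=
  ∃ z : X, (z, z) ∈ closure {p : X × X | ∃ f ∈ S, p = (f x, f y)}

/-- The action of the set `S` of self-maps of `X` is distal. -/
def IsDistalAction {X : Type*} [TopologicalSpace X] (S : Set (X → X)) : Prop :=
  ∀ x y : X, IsProximal S x y → x = y

/-- The set of self-maps of `𝔅` induced by a set of permutations. -/
noncomputable def permAct (S : Set (Equiv.Perm ℕ+)) : Set (Bset → Bset) :=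
  {f | ∃ σ ∈ S, f = fPerm σ}

/-- The orbit `xS` of a point of `𝔅`. -/
def pointOrbit (x : Bset) (S : Set (Equiv.Perm ℕ+)) : Set Bset :=
  {y | ∃ σ ∈ S, y = fPerm σ x}

/-- `P S = {x σ : x ∈ P, σ ∈ S}`, the action of a set of permutations on a set of points. -/
def actSet (P : Set Bset) (S : Set (Equiv.Perm ℕ+)) : Set Bset :=
  {y | ∃ x ∈ P, ∃ σ ∈ S, y = fPerm σ x}

/-- `T_n`: permutations fixing every `k > n`. -/
def TnSet (n : ℕ+) : Set (Equiv.Perm ℕ+) := {σ | ∀ k : ℕ+, n < k → σ k = k}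

/-- `T`: the finitary permutations of the positive integers. -/
def Tfin : Set (Equiv.Perm ℕ+) := {σ | ∃ n : ℕ+, ∀ k : ℕ+, n < k → σ k = k}

noncomputable def onePt : Bset := ⟨1, Or.inr ⟨1, by norm_num⟩⟩
def zeroPt : Bset := ⟨0, Or.inl rfl⟩

noncomputable def mkPt (m : ℕ+) : Bset := ⟨1 / ((m : ℕ) : ℝ), Or.inr ⟨m, rfl⟩⟩

lemma pnat_div_inj {a b : ℕ+} (h : (1:ℝ)/((a:ℕ):ℝ) = 1/((b:ℕ):ℝ)) : a = b := by
  have ha : ((a:ℕ):ℝ) ≠ 0 := by positivity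
  have hb : ((b:ℕ):ℝ) ≠ 0 := by positivity
  field_simp at h
  exact_mod_cast h.symm

lemma fPerm_mk (σ : Equiv.Perm ℕ+) (k : ℕ+) (x : Bset) (hx : (x:ℝ) = 1/((k:ℕ):ℝ)) :
    fPerm σ x = mkPt (σ k) := by
  have h : ∃ n : ℕ+, (x : ℝ) = 1 / ((n : ℕ) : ℝ) := ⟨k, hx⟩
  have hc : ∀ (h' : ∃ n : ℕ+, (x:ℝ) = 1/((n:ℕ):ℝ)), h'.choose = k := fun h' => by
    apply pnat_div_inj
    rw [← h'.choose_spec, hx]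
  rw [fPerm, dif_pos h]
  apply Subtype.ext
  show 1 / (((σ (Exists.choose _) : ℕ+):ℕ):ℝ) = 1 / (((σ k :ℕ+):ℕ):ℝ)
  rw [hc]

lemma fPerm_zero (σ : Equiv.Perm ℕ+) (x : Bset) (hx : (x:ℝ) = 0) :
    fPerm σ x = zeroPt := by
  have h : ¬ ∃ n : ℕ+, (x : ℝ) = 1 / ((n : ℕ) : ℝ) := by
    rintro ⟨n, hn⟩
    have : ((n:ℕ):ℝ) > 0 := by positivity
    rw [hx] at hn
    have : (1:ℝ)/((n:ℕ):ℝ) > 0 := by positivity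
    linarith [hn ▸ this]
  rw [fPerm, dif_neg h]
  rfl











lemma bset_cases (x : Bset) : (x:ℝ) = 0 ∨ ∃ k : ℕ+, (x:ℝ) = 1/((k:ℕ):ℝ) := x.2

lemma fPerm_one (x : Bset) : fPerm 1 x = x := by
  rcases bset_cases x with h | ⟨k, hk⟩
  · rw [fPerm_zero 1 x h]; exact Subtype.ext h.symm
  · rw [fPerm_mk 1 k x hk]; exact Subtype.ext hk.symm

lemma fPerm_mul (σ τ : Equiv.Perm ℕ+) (x : Bset) :
    fPerm (σ * τ) x = fPerm σ (fPerm τ x) := by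
  rcases bset_cases x with h | ⟨k, hk⟩
  · rw [fPerm_zero (σ*τ) x h, fPerm_zero τ x h, fPerm_zero σ zeroPt rfl]
  · rw [fPerm_mk (σ*τ) k x hk, fPerm_mk τ k x hk, fPerm_mk σ (τ k) (mkPt (τ k)) rfl]
    rfl

lemma fPerm_inj (σ : Equiv.Perm ℕ+) {x y : Bset} (h : fPerm σ x = fPerm σ y) : x = y := by
  have := congrArg (fPerm σ⁻¹) h
  rwa [← fPerm_mul, ← fPerm_mul, inv_mul_cancel, fPerm_one, fPerm_one] at this

lemma actSet_eq_biUnion (P : Set Bset) (S : Set (Equiv.Perm ℕ+)) :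
    actSet P S = ⋃ x ∈ P, pointOrbit x S := by
  ext y
  simp [actSet, pointOrbit]

lemma actSet_mono {P Q : Set Bset} (S : Set (Equiv.Perm ℕ+)) (h : P ⊆ Q) :
    actSet P S ⊆ actSet Q S := by
  rintro y ⟨x, hx, σ, hσ, rfl⟩
  exact ⟨x, h hx, σ, hσ, rfl⟩

lemma subset_actSet {P : Set Bset} {S : Set (Equiv.Perm ℕ+)} (h1 : 1 ∈ S) :
    P ⊆ actSet P S := fun x hx => ⟨x, hx, 1, h1, (fPerm_one x).symm⟩

lemma actSet_actSet {P : Set Bset} {S : Set (Equiv.Perm ℕ+)} (h1 : 1 ∈ S)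
    (hm : ∀ σ ∈ S, ∀ τ ∈ S, σ * τ ∈ S) :
    actSet (actSet P S) S = actSet P S := by
  apply Set.Subset.antisymm
  · rintro y ⟨x, ⟨w, hw, τ, hτ, rfl⟩, σ, hσ, rfl⟩
    exact ⟨w, hw, σ * τ, hm σ hσ τ hτ, by rw [fPerm_mul]⟩
  · exact subset_actSet h1

/-- Lemma B: if all orbits are finite, the action is distal. -/
lemma distal_of_finite_orbits (S : Set (Equiv.Perm ℕ+))
    (hfin : ∀ x : Bset, (pointOrbit x S).Finite) :
    IsDistalAction (permAct S) := by
  rintro x y ⟨z, hz⟩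
  have hE : {p : Bset × Bset | ∃ f ∈ permAct S, p = (f x, f y)} ⊆
      (pointOrbit x S) ×ˢ (pointOrbit y S) := by
    rintro p ⟨f, ⟨σ, hσ, rfl⟩, rfl⟩
    exact ⟨⟨σ, hσ, rfl⟩, ⟨σ, hσ, rfl⟩⟩
  have hEfin : {p : Bset × Bset | ∃ f ∈ permAct S, p = (f x, f y)}.Finite :=
    Set.Finite.subset (Set.Finite.prod (hfin x) (hfin y)) hE
  rw [hEfin.isClosed.closure_eq] at hz
  obtain ⟨f, ⟨σ, hσ, rfl⟩, hp⟩ := hz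
  have h1 : z = fPerm σ x := congrArg Prod.fst hp
  have h2 : z = fPerm σ y := congrArg Prod.snd hp
  exact fPerm_inj σ (h1 ▸ h2 ▸ rfl : fPerm σ x = fPerm σ y)

lemma pnat_le_finite (N : ℕ) : {m : ℕ+ | (m:ℕ) ≤ N}.Finite := by
  apply Set.Finite.preimage (f := (PNat.val : ℕ+ → ℕ)) (Set.injOn_of_injective PNat.coe_injective)
    (Set.finite_Iic N)

/-- Lemma A: a distal action has finite orbits. -/
lemma finite_orbits_of_distal (S : Set (Equiv.Perm ℕ+))
    (hd : IsDistalAction (permAct S)) (x : Bset) : (pointOrbit x S).Finite := by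
  rcases bset_cases x with h | ⟨k, hk⟩
  · apply Set.Finite.subset (Set.finite_singleton zeroPt)
    rintro y ⟨σ, hσ, rfl⟩
    rw [fPerm_zero σ x h]; rfl
  · by_contra hinf
    -- the set of values σ k is infinite
    have horb : pointOrbit x S = (fun m => mkPt m) '' ((fun σ => σ k) '' S) := by
      ext y
      constructor
      · rintro ⟨σ, hσ, rfl⟩
        exact ⟨σ k, ⟨σ, hσ, rfl⟩, (fPerm_mk σ k x hk).symm⟩
      · rintro ⟨m, ⟨σ, hσ, rfl⟩, rfl⟩
        exact ⟨σ, hσ, (fPerm_mk σ k x hk).symm⟩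
    have hT : ((fun σ => σ k) '' S).Infinite := by
      intro hfin
      exact hinf (horb ▸ hfin.image _)
    -- proximality of zeroPt and x
    have hprox : IsProximal (permAct S) zeroPt x := by
      refine ⟨zeroPt, ?_⟩
      rw [Metric.mem_closure_iff]
      intro ε hε
      obtain ⟨m, ⟨σ, hσ, rfl⟩, hm⟩ := hT.exists_gt ⟨⌈1/ε⌉₊ + 1, Nat.succ_pos _⟩
      refine ⟨(fPerm σ zeroPt, fPerm σ x), ⟨fPerm σ, ⟨σ, hσ, rfl⟩, rfl⟩, ?_⟩
      rw [fPerm_zero σ zeroPt rfl, fPerm_mk σ k x hk]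
      have hmr : (1:ℝ)/ε < (((σ k : ℕ+):ℕ):ℝ) := by
        have h1 : ((1:ℝ)/ε) ≤ (⌈1/ε⌉₊ : ℝ) := Nat.le_ceil _
        have h2' : (⌈1/ε⌉₊ + 1 : ℕ) ≤ ((σ k : ℕ+):ℕ) := by
          exact_mod_cast hm.le
        have h2 : ((⌈1/ε⌉₊ + 1 : ℕ) : ℝ) ≤ (((σ k : ℕ+):ℕ):ℝ) := by exact_mod_cast h2'

        push_cast at h2 ⊢
        linarith
      have hpos : (0:ℝ) < (((σ k : ℕ+):ℕ):ℝ) := by positivity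
      have hdist : dist zeroPt (mkPt (σ k)) < ε := by
        have hlt : (1:ℝ)/(((σ k:ℕ+):ℕ):ℝ) < ε := by
          rw [div_lt_iff₀ hpos, mul_comm]
          exact (div_lt_iff₀ hε).mp hmr
        rw [Subtype.dist_eq]
        simp only [zeroPt, mkPt]
        rw [Real.dist_eq, abs_of_nonpos (by rw [zero_sub, neg_nonpos]; positivity)]
        simpa using hlt
      calc dist ((zeroPt, zeroPt) : Bset × Bset) (zeroPt, mkPt (σ k))
          = max (dist zeroPt zeroPt) (dist zeroPt (mkPt (σ k))) := Prod.dist_eq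
        _ < ε := by rw [dist_self]; exact max_lt hε hdist
    have := hd zeroPt x hprox
    rw [← this] at hk
    simp only [zeroPt] at hk
    have : ((k:ℕ):ℝ) > 0 := by positivity
    have h1 : (1:ℝ)/((k:ℕ):ℝ) > 0 := by positivity
    rw [← hk] at h1
    exact lt_irrefl 0 h1

lemma foldl_mono : ∀ (l : List (Set (Equiv.Perm ℕ+))) {P Q : Set Bset}, P ⊆ Q →
    l.foldl actSet P ⊆ l.foldl actSet Q
  | [], P, Q, h => h
  | (s :: l), P, Q, h => foldl_mono l (actSet_mono s h)

lemma subset_foldl : ∀ (l : List (Set (Equiv.Perm ℕ+))), (∀ s ∈ l, 1 ∈ s) →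
    ∀ (P : Set Bset), P ⊆ l.foldl actSet P
  | [], _, P => le_refl P
  | (s :: l), h, P =>
    (subset_actSet (h s (List.mem_cons_self (a := s) (l := l)))).trans
      (subset_foldl l (fun t ht => h t (List.mem_cons_of_mem s ht)) (actSet P s))

lemma foldl_sublist : ∀ {l l' : List (Set (Equiv.Perm ℕ+))}, List.Sublist l l' → (∀ s ∈ l', 1 ∈ s) →
    ∀ (P : Set Bset), l.foldl actSet P ⊆ l'.foldl actSet P := by
  intro l l' h
  induction h with
  | slnil => exact fun _ P => le_refl P
  | cons s hsub ih =>
    intro h1 P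
    refine (ih (fun t ht => h1 t (List.mem_cons_of_mem _ ht)) P).trans ?_
    exact foldl_mono _ (subset_actSet (h1 s List.mem_cons_self))
  | cons_cons s hsub ih =>
    intro h1 P
    exact ih (fun t ht => h1 t (List.mem_cons_of_mem _ ht)) (actSet P s)

lemma foldl_finite : ∀ (l : List (Set (Equiv.Perm ℕ+))),
    (∀ s ∈ l, ∀ x : Bset, (pointOrbit x s).Finite) →
    ∀ (P : Set Bset), P.Finite → (l.foldl actSet P).Finite
  | [], _, P, hP => hP
  | (s :: l), h, P, hP => by
    refine foldl_finite l (fun t ht => h t (List.mem_cons_of_mem s ht)) _ ?_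
    rw [actSet_eq_biUnion]
    exact hP.biUnion (fun x _ => h s (List.mem_cons_self (a := s) (l := l)) x)

lemma bound_lemma (n : ℕ) (Ssub : Fin n → Set (Equiv.Perm ℕ+))
    (h1 : ∀ i, 1 ∈ Ssub i)
    (hmulS : ∀ i, ∀ σ ∈ Ssub i, ∀ τ ∈ Ssub i, σ * τ ∈ Ssub i)
    (hperm : ∀ l l' : List (Fin n), l.Perm l' → ∀ x : Bset,
      (l.map Ssub).foldl actSet {x} = (l'.map Ssub).foldl actSet {x}) :
    ∀ N (l : List (Fin n)), l.length ≤ N → ∀ y : Bset,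
      (l.map Ssub).foldl actSet {y} ⊆ ((List.finRange n).map Ssub).foldl actSet {y} := by
  have hone : ∀ s ∈ (List.finRange n).map Ssub, (1 : Equiv.Perm ℕ+) ∈ s := by
    intro s hs
    obtain ⟨i, _, rfl⟩ := List.mem_map.mp hs
    exact h1 i
  intro N
  induction N with
  | zero =>
    intro l hl y
    rw [List.length_eq_zero_iff.mp (Nat.le_zero.mp hl)]
    exact subset_foldl _ hone {y}
  | succ N ih =>
    intro l hl y
    by_cases hnd : l.Nodup
    · obtain ⟨l', hp, hs⟩ := hnd.subperm (fun a _ => List.mem_finRange a)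
      rw [hperm l l' hp.symm y]
      exact foldl_sublist (hs.map Ssub) hone {y}
    · -- find a duplicate
      obtain ⟨a, ha⟩ : ∃ a, ¬ l.count a ≤ 1 := by
        by_contra hc
        push_neg at hc
        exact hnd (List.nodup_iff_count_le_one.mpr fun a => (hc a))
      have ha2 : 2 ≤ l.count a := by omega
      have hamem : a ∈ l := List.count_pos_iff.mp (by omega)
      have hamem2 : a ∈ l.erase a := by
        have := List.count_erase_self (a := a) (l := l)
        exact List.count_pos_iff.mp (by omega)
      have hperm1 : l.Perm (a :: a :: (l.erase a).erase a) :=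
        (List.perm_cons_erase hamem).trans ((List.perm_cons_erase hamem2).cons a)
      rw [hperm l _ hperm1 y]
      have hcollapse : ((a :: a :: (l.erase a).erase a).map Ssub).foldl actSet {y}
          = ((a :: (l.erase a).erase a).map Ssub).foldl actSet {y} := by
        simp only [List.map_cons, List.foldl_cons]
        rw [actSet_actSet (h1 a) (hmulS a)]
      rw [hcollapse]
      apply ih
      have hlen : (l.erase a).length = l.length - 1 := List.length_erase_of_mem hamem
      have hlen2 : ((l.erase a).erase a).length = (l.erase a).length - 1 :=
        List.length_erase_of_mem hamem2
      have hpos : 1 ≤ l.length := List.length_pos_iff.mpr (List.ne_nil_of_mem hamem)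
      have hc2 : 2 ≤ l.length := le_trans ha2 (List.count_le_length (a := a) (l := l))
      simp only [List.length_cons, hlen2, hlen]
      omega


/-- For a set `S` of permutations of the positive integers closed under
composition and containing the identity, acting on `𝔅` via `σ ↦ f_σ`: the action is distal
iff it admits a finite pseudo-co-decomposition `(𝔅,(S_i : 1 ≤ i ≤ n))` into distal
transformation semigroups. -/
theorem stmt2 (S : Set (Equiv.Perm ℕ+)) (hid : 1 ∈ S)
    (hmul : ∀ σ ∈ S, ∀ τ ∈ S, σ * τ ∈ S) :
    IsDistalAction (permAct S) ↔
      ∃ (n : ℕ) (Ssub : Fin n → Set (Equiv.Perm ℕ+)), 0 < n ∧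
        (∀ i, Ssub i ⊆ S) ∧
        (∀ i, 1 ∈ Ssub i) ∧
        (∀ i, ∀ σ ∈ Ssub i, ∀ τ ∈ Ssub i, σ * τ ∈ Ssub i) ∧
        (Subsemigroup.closure (⋃ i, Ssub i) : Set (Equiv.Perm ℕ+)) = S ∧
        (∀ l l' : List (Fin n), l.Perm l' → ∀ x : Bset,
          (l.map Ssub).foldl actSet {x} = (l'.map Ssub).foldl actSet {x}) ∧
        (∀ i, IsDistalAction (permAct (Ssub i))) := by
  constructor
  · intro h
    refine ⟨1, fun _ => S, one_pos, fun _ => subset_rfl, fun _ => hid, fun _ => hmul, ?_, ?_,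
      fun _ => h⟩
    · rw [Set.iUnion_const S]
      apply Set.Subset.antisymm
      · intro a ha
        induction ha using Subsemigroup.closure_induction with
        | mem b hb => exact hb
        | mul b c _ _ hb hc => exact hmul b hb c hc
      · exact Subsemigroup.subset_closure
    · intro l l' hp x
      have hmap : ∀ m : List (Fin 1), m.map (fun _ => S) = List.replicate m.length S := by
        intro m
        apply List.eq_replicate_iff.mpr
        simp
      rw [hmap l, hmap l', hp.length_eq]
  · rintro ⟨n, Ssub, hn, hsub, h1, hmulS, hcl, hperm, hdist⟩
    apply distal_of_finite_orbits
    intro x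
    have horbfin : ∀ i, ∀ y : Bset, (pointOrbit y (Ssub i)).Finite :=
      fun i => finite_orbits_of_distal _ (hdist i)
    -- every element of S moves points within a product of the Ssub's
    have hclaim : ∀ σ ∈ Subsemigroup.closure (⋃ i, Ssub i), ∃ l : List (Fin n),
        ∀ y : Bset, fPerm σ y ∈ (l.map Ssub).foldl actSet {y} := by
      intro σ hσ
      induction hσ using Subsemigroup.closure_induction with
      | mem τ hτ =>
        obtain ⟨_, ⟨i, rfl⟩, hi⟩ := hτ
        exact ⟨[i], fun y => ⟨y, rfl, τ, hi, rfl⟩⟩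
      | mul τ ρ hτ hρ ihτ ihρ =>
        obtain ⟨l₁, hl₁⟩ := ihτ
        obtain ⟨l₂, hl₂⟩ := ihρ
        refine ⟨l₂ ++ l₁, fun y => ?_⟩
        rw [fPerm_mul]
        have hmem : fPerm ρ y ∈ (l₂.map Ssub).foldl actSet {y} := hl₂ y
        have : (l₁.map Ssub).foldl actSet {fPerm ρ y} ⊆
            (l₁.map Ssub).foldl actSet ((l₂.map Ssub).foldl actSet {y}) :=
          foldl_mono _ (Set.singleton_subset_iff.mpr hmem)
        have hfold : ((l₂ ++ l₁).map Ssub).foldl actSet {y}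
            = (l₁.map Ssub).foldl actSet ((l₂.map Ssub).foldl actSet {y}) := by
          rw [List.map_append, List.foldl_append]
        rw [hfold]
        exact this (hl₁ (fPerm ρ y))
    -- hence the orbit is contained in a fixed finite set
    have hbig : (((List.finRange n).map Ssub).foldl actSet {x}).Finite := by
      apply foldl_finite
      · intro s hs y
        obtain ⟨i, _, rfl⟩ := List.mem_map.mp hs
        exact horbfin i y
      · exact Set.finite_singleton x
    apply hbig.subset
    rintro y ⟨σ, hσ, rfl⟩
    rw [← hcl] at hσ
    obtain ⟨l, hl⟩ := hclaim σ hσ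
    exact bound_lemma n Ssub h1 hmulS hperm l.length l le_rfl x (hl x)
end

section
/- Let T be the group of finitary permutations of the positive integers (those σ with σ(k) = k for all but finitely many k), acting on 𝔅 via σ ↦ f_σ. Then for every x ∈ 𝔅 \ {0}, the orbit xT equals 𝔅 \ {0} and the pair (0, x) is proximal for (𝔅, T); in particular (𝔅, T) is not distal. -/
open Pointwise Classical

lemma one_div_inj {n m : ℕ+} (h : (1:ℝ) / ((n:ℕ):ℝ) = 1 / ((m:ℕ):ℝ)) : n = m := by
  have hn : ((n:ℕ):ℝ) ≠ 0 := by exact_mod_cast n.ne_zero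
  have hm : ((m:ℕ):ℝ) ≠ 0 := by exact_mod_cast m.ne_zero
  field_simp at h
  exact_mod_cast h.symm

lemma fPerm_apply (σ : Equiv.Perm ℕ+) (x : Bset) (n : ℕ+) (hx : (x : ℝ) = 1 / ((n:ℕ):ℝ)) :
    ((fPerm σ x : Bset) : ℝ) = 1 / (((σ n : ℕ+) : ℕ) : ℝ) := by
  have h : ∃ m : ℕ+, (x : ℝ) = 1 / ((m : ℕ) : ℝ) := ⟨n, hx⟩
  rw [fPerm, dif_pos h]
  have hc : h.choose = n := one_div_inj (h.choose_spec.symm.trans hx)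
  simp only [hc]

lemma one_div_ne_zero' (n : ℕ+) : (1:ℝ) / ((n:ℕ):ℝ) ≠ 0 := by
  have hn : (0:ℝ) < ((n:ℕ):ℝ) := by exact_mod_cast n.pos
  positivity

lemma fPerm_zeroPt (σ : Equiv.Perm ℕ+) : fPerm σ zeroPt = zeroPt := by
  have h : ¬ ∃ m : ℕ+, ((zeroPt : Bset) : ℝ) = 1 / ((m : ℕ) : ℝ) := by
    rintro ⟨m, hm⟩; exact one_div_ne_zero' m (hm.symm)
  apply Subtype.ext
  rw [fPerm, dif_neg h]
  rfl


lemma swap_mem_Tfin (n m : ℕ+) : Equiv.swap n m ∈ Tfin := by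
  refine ⟨max n m, fun k hk => ?_⟩
  exact Equiv.swap_apply_of_ne_of_ne
    (fun h => absurd hk (by rw [h]; exact not_lt.2 (le_max_left n m)))
    (fun h => absurd hk (by rw [h]; exact not_lt.2 (le_max_right n m)))


/-- For the group `T` of finitary permutations acting on `𝔅`: for every
`x ∈ 𝔅 \ {0}` the orbit `xT` equals `𝔅 \ {0}` and `(0, x)` is a proximal pair; in
particular `(𝔅, T)` is not distal. -/
theorem stmt7 :
    (∀ x : Bset, (x : ℝ) ≠ 0 →
      pointOrbit x Tfin = {y : Bset | (y : ℝ) ≠ 0} ∧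
      IsProximal (permAct Tfin) zeroPt x) ∧
    ¬ IsDistalAction (permAct Tfin) := by
  have main : ∀ x : Bset, (x : ℝ) ≠ 0 →
      pointOrbit x Tfin = {y : Bset | (y : ℝ) ≠ 0} ∧
      IsProximal (permAct Tfin) zeroPt x := by
    intro x hx
    obtain ⟨n, hn⟩ : ∃ n : ℕ+, (x : ℝ) = 1 / ((n:ℕ):ℝ) := x.2.resolve_left hx
    constructor
    · ext y
      constructor
      · rintro ⟨σ, hσ, rfl⟩
        show ((fPerm σ x : Bset) : ℝ) ≠ 0
        rw [fPerm_apply σ x n hn]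
        exact one_div_ne_zero' _
      · intro hy
        obtain ⟨m, hm⟩ : ∃ m : ℕ+, (y : ℝ) = 1 / ((m:ℕ):ℝ) := y.2.resolve_left hy
        refine ⟨Equiv.swap n m, swap_mem_Tfin n m, Subtype.ext ?_⟩
        rw [fPerm_apply _ x n hn, Equiv.swap_apply_left, hm]
    · refine ⟨zeroPt, ?_⟩
      set p : ℕ → Bset × Bset := fun k =>
        (fPerm (Equiv.swap n (⟨k + 1, Nat.succ_pos k⟩ : ℕ+)) zeroPt,
         fPerm (Equiv.swap n (⟨k + 1, Nat.succ_pos k⟩ : ℕ+)) x) with hp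
      refine mem_closure_of_tendsto (f := p) (b := Filter.atTop) ?_ ?_
      · rw [nhds_prod_eq]
        refine Filter.Tendsto.prodMk ?_ ?_
        · simp only [hp, fPerm_zeroPt]
          exact tendsto_const_nhds
        · rw [tendsto_subtype_rng]
          have hcoe : ∀ k : ℕ, ((p k).2 : ℝ) = 1 / ((k : ℝ) + 1) := by
            intro k
            simp only [hp]
            rw [fPerm_apply _ x n hn]
            erw [Equiv.swap_apply_left]
            norm_cast
          exact Filter.Tendsto.congr (fun k => (hcoe k).symm)
            tendsto_one_div_add_atTop_nhds_zero_nat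
      · filter_upwards with k
        exact ⟨_, ⟨_, swap_mem_Tfin _ _, rfl⟩, rfl⟩
  refine ⟨main, fun hd => ?_⟩
  have h1 : ((onePt : Bset) : ℝ) ≠ 0 := one_ne_zero
  have := hd zeroPt onePt (main onePt h1).2
  have : ((zeroPt : Bset) : ℝ) = ((onePt : Bset) : ℝ) := by rw [this]
  norm_num [zeroPt, onePt] at this
end
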